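/- arXiv:2409.10864 — 2 statements merged into one kernel-verified Lean document; each statement's English description precedes it below -/
import Mathlib

section
/- Let X be a finite set, f : X → ℝ a function, A an m×n real matrix, b ∈ ℝ^m (with X ⊆ ℝ^n), and suppose the feasible set F = {x ∈ X | A x ≤ b} is nonempty. Define the penalized objective g_ρ(x) = f(x) + ρ · ∑_{j=1}^m max(0, (A x − b)_j). Then there exists ρ₀ > 0 such that for all ρ > ρ₀, every minimizer of g_ρ over X lies in F and is a minimizer of f over F. -/
/-- Exact penalty for finite-domain optimization: if the feasible set
`F = {x ∈ X | A x ≤ b}` is nonempty, then for sufficiently large penalty weight `ρ`,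
every minimizer of the penalized objective `g_ρ(x) = f(x) + ρ · ∑ⱼ max(0, (Ax−b)ⱼ)`
over `X` is feasible and minimizes `f` over `F`. -/
theorem exact_penalty_finite_domain
    (n m : ℕ) (X : Finset (Fin n → ℝ)) (f : (Fin n → ℝ) → ℝ)
    (A : Matrix (Fin m) (Fin n) ℝ) (b : Fin m → ℝ)
    (F : Finset (Fin n → ℝ))
    (hF : F = X.filter (fun x => ∀ j, A.mulVec x j ≤ b j))
    (hFne : F.Nonempty)
    (pen : (Fin n → ℝ) → ℝ)
    (hpen : ∀ x, pen x = ∑ j, max 0 (A.mulVec x j - b j)) :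
    ∃ ρ₀ > (0 : ℝ), ∀ ρ > ρ₀, ∀ x ∈ X,
      (∀ y ∈ X, f x + ρ * pen x ≤ f y + ρ * pen y) →
      x ∈ F ∧ ∀ y ∈ F, f x ≤ f y := by
  have hpen0 : ∀ x, 0 ≤ pen x := by
    intro x
    rw [hpen]
    exact Finset.sum_nonneg (fun j _ => le_max_left _ _)
  have hfeas : ∀ x, pen x = 0 ↔ ∀ j, A.mulVec x j ≤ b j := by
    intro x
    rw [hpen]
    constructor
    · intro h j
      have := (Finset.sum_eq_zero_iff_of_nonneg
        (fun j _ => le_max_left 0 (A.mulVec x j - b j))).mp h j (Finset.mem_univ j)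
      have : A.mulVec x j - b j ≤ 0 := by
        by_contra hc
        push_neg at hc
        rw [max_eq_right hc.le] at this
        linarith
      linarith
    · intro h
      apply Finset.sum_eq_zero
      intro j _
      exact max_eq_left (by linarith [h j])
  obtain ⟨x₀, hx₀F⟩ := hFne
  have hx₀X : x₀ ∈ X := by rw [hF] at hx₀F; exact (Finset.mem_filter.mp hx₀F).1
  have hx₀feas : ∀ j, A.mulVec x₀ j ≤ b j := by
    rw [hF] at hx₀F; exact (Finset.mem_filter.mp hx₀F).2
  have hx₀pen : pen x₀ = 0 := (hfeas x₀).mpr hx₀feas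
  have hXne : X.Nonempty := ⟨x₀, hx₀X⟩
  set S := X.filter (fun x => ¬ ∀ j, A.mulVec x j ≤ b j) with hS
  by_cases hSne : S.Nonempty
  · set δ := S.inf' hSne pen with hδ
    have hδpos : 0 < δ := by
      obtain ⟨z, hz, hzeq⟩ := S.exists_mem_eq_inf' hSne pen
      rw [hδ, hzeq]
      have hzinf : ¬ ∀ j, A.mulVec z j ≤ b j := (Finset.mem_filter.mp hz).2
      have : pen z ≠ 0 := fun h => hzinf ((hfeas z).mp h)
      exact lt_of_le_of_ne (hpen0 z) (Ne.symm this)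
    set M := X.sup' hXne f with hM
    set mm := X.inf' hXne f with hmm
    refine ⟨(M - mm) / δ + 1, ?_, ?_⟩
    · have : mm ≤ M := le_trans (Finset.inf'_le f hx₀X) (Finset.le_sup' f hx₀X)
      have h2 : 0 ≤ (M - mm) / δ := div_nonneg (by linarith) hδpos.le
      linarith
    · intro ρ hρ x hxX hmin
      have hMm : mm ≤ M := le_trans (Finset.inf'_le f hx₀X) (Finset.le_sup' f hx₀X)
      have hρpos : 0 < ρ := by
        have h2 : 0 ≤ (M - mm) / δ := div_nonneg (by linarith) hδpos.le
        linarith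
      have hxfeas : ∀ j, A.mulVec x j ≤ b j := by
        by_contra hc
        have hxS : x ∈ S := Finset.mem_filter.mpr ⟨hxX, hc⟩
        have hδle : δ ≤ pen x := Finset.inf'_le pen hxS
        have h1 : f x + ρ * pen x ≤ f x₀ := by
          have := hmin x₀ hx₀X
          rw [hx₀pen] at this
          linarith
        have h2 : f x₀ ≤ M := Finset.le_sup' f hx₀X
        have h3 : mm ≤ f x := Finset.inf'_le f hxX
        have h4 : ρ * δ ≤ M - mm := by nlinarith
        have h5 : (M - mm) / δ < ρ := by linarith
        rw [div_lt_iff₀ hδpos] at h5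
        nlinarith
      have hxF : x ∈ F := by
        rw [hF]; exact Finset.mem_filter.mpr ⟨hxX, hxfeas⟩
      refine ⟨hxF, fun y hyF => ?_⟩
      have hyX : y ∈ X := by rw [hF] at hyF; exact (Finset.mem_filter.mp hyF).1
      have hypen : pen y = 0 := (hfeas y).mpr (by rw [hF] at hyF; exact (Finset.mem_filter.mp hyF).2)
      have hxpen : pen x = 0 := (hfeas x).mpr hxfeas
      have := hmin y hyX
      rw [hxpen, hypen] at this
      linarith
  · refine ⟨1, one_pos, ?_⟩
    intro ρ hρ x hxX hmin
    have hxfeas : ∀ j, A.mulVec x j ≤ b j := by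
      by_contra hc
      exact hSne ⟨x, Finset.mem_filter.mpr ⟨hxX, hc⟩⟩
    have hxF : x ∈ F := by rw [hF]; exact Finset.mem_filter.mpr ⟨hxX, hxfeas⟩
    refine ⟨hxF, fun y hyF => ?_⟩
    have hyX : y ∈ X := by rw [hF] at hyF; exact (Finset.mem_filter.mp hyF).1
    have hypen : pen y = 0 := (hfeas y).mpr (by rw [hF] at hyF; exact (Finset.mem_filter.mp hyF).2)
    have hxpen : pen x = 0 := (hfeas x).mpr hxfeas
    have := hmin y hyX
    rw [hxpen, hypen] at this
    linarith
end

section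
/- Let X ⊆ ℤ^n be finite and nonempty, f : X → ℝ linear (f(x) = qᵀx), A ∈ ℝ^{m×n}, b ∈ ℝ^m with {x ∈ X | Ax ≤ b} nonempty. Set ξ = max_{x,y∈X} (f(x) − f(y)) and ε = min { ∑_j max(0,(Ax−b)_j) : x ∈ X, Ax ≰ b } (taking ε = +∞ if every x ∈ X is feasible). Then for any ρ > ξ/ε, every minimizer of f(x) + ρ·∑_j max(0,(Ax−b)_j) over X satisfies Ax ≤ b. -/
/-- Quantitative version of Lemma 2 with an explicit threshold: with `X ⊆ ℤⁿ` finite,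
`f` linear, `ξ` the maximum objective variation over `X` and `ε` the minimum positive
constraint violation, any `ρ > ξ/ε` makes every minimizer of the penalized objective
feasible (the case where every point is feasible, `ε = +∞`, is trivial). -/
theorem exact_penalty_quantitative
    (n m : ℕ) (X : Finset (Fin n → ℤ)) (hXne : X.Nonempty)
    (q : Fin n → ℝ) (A : Matrix (Fin m) (Fin n) ℝ) (b : Fin m → ℝ)
    (f : (Fin n → ℤ) → ℝ) (hf : ∀ x, f x = ∑ i, q i * (x i : ℝ))
    (pen : (Fin n → ℤ) → ℝ)
    (hpen : ∀ x, pen x = ∑ j, max 0 (A.mulVec (fun i => ((x i : ℝ))) j - b j))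
    (hfeas : ∃ x ∈ X, ∀ j, A.mulVec (fun i => ((x i : ℝ))) j ≤ b j)
    (ξ : ℝ) (hξ : ξ = (X ×ˢ X).sup' (hXne.product hXne) (fun p => f p.1 - f p.2))
    (V : Finset (Fin n → ℤ))
    (hV : V = X.filter (fun x => ¬ ∀ j, A.mulVec (fun i => ((x i : ℝ))) j ≤ b j))
    (ρ : ℝ) (hρpos : 0 < ρ)
    (hρ : ∀ h : V.Nonempty, ξ / V.inf' h pen < ρ) :
    ∀ x ∈ X, (∀ y ∈ X, f x + ρ * pen x ≤ f y + ρ * pen y) →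
      ∀ j, A.mulVec (fun i => ((x i : ℝ))) j ≤ b j := by
  intro x hxX hmin
  by_contra hviol
  push_neg at hviol
  -- x ∈ V
  have hxV : x ∈ V := by
    rw [hV, Finset.mem_filter]
    refine ⟨hxX, ?_⟩
    push_neg
    exact hviol
  have hVne : V.Nonempty := ⟨x, hxV⟩
  -- pen positive on V
  have hpenpos : ∀ z ∈ V, 0 < pen z := by
    intro z hzV
    rw [hV, Finset.mem_filter] at hzV
    push_neg at hzV
    obtain ⟨j, hj⟩ := hzV.2
    rw [hpen]
    have h1 : 0 < max 0 (A.mulVec (fun i => ((z i : ℝ))) j - b j) := by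
      simp [lt_max_iff]; linarith
    refine Finset.sum_pos' (fun k _ => le_max_left _ _) ⟨j, Finset.mem_univ j, h1⟩
  set ε := V.inf' hVne pen with hε
  have hεpos : 0 < ε := by
    obtain ⟨z, hzV, hz⟩ := V.exists_mem_eq_inf' hVne pen
    rw [hε, hz]
    exact hpenpos z hzV
  have hρε : ξ < ρ * ε := by
    have := hρ hVne
    rw [div_lt_iff₀ hεpos] at this
    linarith [mul_comm ε ρ]
  have hεle : ε ≤ pen x := Finset.inf'_le pen hxV
  -- feasible point
  obtain ⟨x₀, hx₀X, hx₀⟩ := hfeas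
  have hpen0 : pen x₀ = 0 := by
    rw [hpen]
    refine Finset.sum_eq_zero fun j _ => ?_
    have := hx₀ j
    simp [max_eq_left]; linarith
  have hxi : f x₀ - f x ≤ ξ := by
    rw [hξ]
    exact Finset.le_sup' (fun p => f p.1 - f p.2) (Finset.mem_product.mpr ⟨hx₀X, hxX⟩ : (x₀, x) ∈ X ×ˢ X)
  have := hmin x₀ hx₀X
  rw [hpen0] at this
  have hρpen : ρ * ε ≤ ρ * pen x := by nlinarith
  nlinarith
end
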